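/- If the variety of K4.Grz-algebras is closed under the doubleton construction, then the rule □α / α is admissible in K4.Grz in the algebraic sense: if a formula α (in the language of Boolean algebras with □) is refuted in some K4.Grz-algebra under some valuation, then □α is refuted in the doubleton of that algebra under the valuation p ↦ (v(p), 1). Formally: for any K4.Grz-algebra A, valuation v on A, and formula α with interpretation ⟦α⟧_v ≠ 1 in A, the interpretation of □α in the doubleton A* under the valuation p ↦ (v(p), 1) is not equal to (1,1). -/
import Mathlib


inductive MFormula where
  | var : ℕ → MFormula
  | and : MFormula → MFormula → MFormula
  | or : MFormula → MFormula → MFormula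
  | not : MFormula → MFormula
  | box : MFormula → MFormula

def MFormula.eval {B : Type*} [BooleanAlgebra B] (bx : B → B) (v : ℕ → B) :
    MFormula → B
  | .var p => v p
  | .and α β => α.eval bx v ⊓ β.eval bx v
  | .or α β => α.eval bx v ⊔ β.eval bx v
  | .not α => (α.eval bx v)ᶜ
  | .box α => bx (α.eval bx v)

theorem stmt_14 {B : Type*} [BooleanAlgebra B] (box : B → B)
    (h1 : box ⊤ = ⊤) (h2 : ∀ x y : B, box (x ⊓ y) = box x ⊓ box y)
    (h3 : ∀ x : B, box x ≤ box (box x))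
    (h4 : ∀ x : B, box ((box (xᶜ ⊔ box x))ᶜ ⊔ x) ≤ box x)
    (boxD : B × Bool → B × Bool)
    (hD : ∀ a : B × Bool, (boxD a).1 = box a.1 ∧ ((boxD a).2 = ⊤ ↔ a.1 = ⊤))
    (v : ℕ → B) (α : MFormula) (hα : α.eval box v ≠ ⊤) :
    (MFormula.box α).eval boxD (fun p => (v p, ⊤)) ≠ ⊤ := by
  have key : ∀ β : MFormula,
      (β.eval boxD (fun p => (v p, ⊤))).1 = β.eval box v := by
    intro β
    induction β with
    | var p => rfl
    | and a b ha hb => simp only [MFormula.eval, Prod.fst_inf, ha, hb]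
    | or a b ha hb => simp only [MFormula.eval, Prod.fst_sup, ha, hb]
    | not a ha => show (MFormula.eval boxD _ a).1ᶜ = _; rw [ha]; rfl
    | box a ha => simp only [MFormula.eval, (hD _).1, ha]
  intro h
  apply hα
  have h2' : (boxD (α.eval boxD (fun p => (v p, ⊤)))).2 = ⊤ := by
    rw [show (MFormula.box α).eval boxD (fun p => (v p, ⊤)) =
      boxD (α.eval boxD (fun p => (v p, ⊤))) from rfl] at h
    rw [h]; rfl
  have := ((hD _).2).mp h2'
  rwa [key] at this
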